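/- Let X be a Tychonoff space and μ : C*(X) → ℝ a functional. Then μ is normed, weakly additive, preserves min and weakly preserves max (i.e. μ ∈ R_min(X)) if and only if there exists a nonempty compact set F ⊆ βX such that F = S(μ) and μ(f) = inf{βf(x) : x ∈ F} for all f ∈ C*(X). Moreover, μ ∈ R_min(X)_c (i.e. additionally S(μ) ⊆ η(X)) if and only if such an F exists with F ⊆ η(X). -/
import Mathlib


open Set

/-- The Čech–Stone extension `βf : βX → ℝ` of a bounded continuous function `f : X → ℝ`
(obtained by extending `f`, viewed as a map into the compact interval `[-‖f‖, ‖f‖]`,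
over the Stone–Čech compactification). -/
noncomputable def betaExt {X : Type*} [TopologicalSpace X] (f : BoundedContinuousFunction X ℝ) :
    StoneCech X → ℝ :=
  Subtype.val ∘ stoneCechExtend
    (Continuous.subtype_mk f.continuous
      (fun x => Set.mem_Icc.mpr (abs_le.mp (Real.norm_eq_abs (f x) ▸ f.norm_coe_le_norm x)))
      : Continuous fun x => (⟨f x, _⟩ : Set.Icc (-‖f‖) ‖f‖))

variable {X : Type*} [TopologicalSpace X]

/-- `μ` is *normed*: `μ 1 = 1`. -/
def BNormed (μ : BoundedContinuousFunction X ℝ → ℝ) : Prop := μ 1 = 1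

/-- `μ` is *weakly additive*: `μ (f + c·1) = μ f + c`. -/
def BWeaklyAdditive (μ : BoundedContinuousFunction X ℝ → ℝ) : Prop :=
  ∀ (f : BoundedContinuousFunction X ℝ) (c : ℝ),
    μ (f + BoundedContinuousFunction.const X c) = μ f + c

/-- `μ` *preserves min*. -/
def BPreservesMin (μ : BoundedContinuousFunction X ℝ → ℝ) : Prop :=
  ∀ f g : BoundedContinuousFunction X ℝ, μ (f ⊓ g) = min (μ f) (μ g)

/-- `μ` *preserves max*. -/
def BPreservesMax (μ : BoundedContinuousFunction X ℝ → ℝ) : Prop :=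
  ∀ f g : BoundedContinuousFunction X ℝ, μ (f ⊔ g) = max (μ f) (μ g)

/-- `μ` *weakly preserves min*: `μ (min{f, c·1}) = min{μ f, c}`. -/
def BWeaklyPreservesMin (μ : BoundedContinuousFunction X ℝ → ℝ) : Prop :=
  ∀ (f : BoundedContinuousFunction X ℝ) (c : ℝ),
    μ (f ⊓ BoundedContinuousFunction.const X c) = min (μ f) c

/-- `μ` *weakly preserves max*: `μ (max{f, c·1}) = max{μ f, c}`. -/
def BWeaklyPreservesMax (μ : BoundedContinuousFunction X ℝ → ℝ) : Prop :=
  ∀ (f : BoundedContinuousFunction X ℝ) (c : ℝ),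
    μ (f ⊔ BoundedContinuousFunction.const X c) = max (μ f) c

/-- The support `S(μ) ⊆ βX` of a functional `μ` on `C*(X)`: points `p ∈ βX` such that every
open neighbourhood `O` of `p` admits `f, g ∈ C*(X)` with `βf = βg` off `O` and `μ f ≠ μ g`. -/
def betaSupport (μ : BoundedContinuousFunction X ℝ → ℝ) : Set (StoneCech X) :=
  {p | ∀ O : Set (StoneCech X), IsOpen O → p ∈ O →
    ∃ f g : BoundedContinuousFunction X ℝ,
      (∀ q ∉ O, betaExt f q = betaExt g q) ∧ μ f ≠ μ g}

/-- `R_min(X)`: normed, weakly additive functionals preserving min and weakly preserving max. -/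
def RMin (X : Type*) [TopologicalSpace X] : Set (BoundedContinuousFunction X ℝ → ℝ) :=
  {μ | BNormed μ ∧ BWeaklyAdditive μ ∧ BPreservesMin μ ∧ BWeaklyPreservesMax μ}

/-- `R_max(X)`: normed, weakly additive functionals preserving max and weakly preserving min. -/
def RMax (X : Type*) [TopologicalSpace X] : Set (BoundedContinuousFunction X ℝ → ℝ) :=
  {μ | BNormed μ ∧ BWeaklyAdditive μ ∧ BPreservesMax μ ∧ BWeaklyPreservesMin μ}

/-- `R_min(X)_c`: members of `R_min(X)` with compact support, i.e. `∅ ≠ S(μ) ⊆ η(X)`. -/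
def RMinC (X : Type*) [TopologicalSpace X] : Set (BoundedContinuousFunction X ℝ → ℝ) :=
  {μ | μ ∈ RMin X ∧ (betaSupport μ).Nonempty ∧
    betaSupport μ ⊆ Set.range (stoneCechUnit : X → StoneCech X)}

/-- `R_max(X)_c`: members of `R_max(X)` with compact support, i.e. `∅ ≠ S(μ) ⊆ η(X)`. -/
def RMaxC (X : Type*) [TopologicalSpace X] : Set (BoundedContinuousFunction X ℝ → ℝ) :=
  {μ | μ ∈ RMax X ∧ (betaSupport μ).Nonempty ∧
    betaSupport μ ⊆ Set.range (stoneCechUnit : X → StoneCech X)}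

section AuxLemmas

open BoundedContinuousFunction

variable {X : Type*} [TopologicalSpace X]

lemma betaExt_unit (f : BoundedContinuousFunction X ℝ) (x : X) :
    betaExt f (stoneCechUnit x) = f x := by
  unfold betaExt
  rw [Function.comp_apply, ← Function.comp_apply (f := stoneCechExtend _)
    (g := stoneCechUnit), stoneCechExtend_extends]

lemma continuous_betaExt (f : BoundedContinuousFunction X ℝ) : Continuous (betaExt f) :=
  continuous_subtype_val.comp (continuous_stoneCechExtend _)

lemma betaExt_mem (f : BoundedContinuousFunction X ℝ) (p : StoneCech X) :
    betaExt f p ∈ Set.Icc (-‖f‖) ‖f‖ := by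
  unfold betaExt
  exact Subtype.coe_prop _

lemma betaExt_eq {f : BoundedContinuousFunction X ℝ} {u : StoneCech X → ℝ}
    (hu : Continuous u) (h : ∀ x, u (stoneCechUnit x) = f x) : betaExt f = u :=
  stoneCech_hom_ext (continuous_betaExt f) hu
    (funext fun x => (betaExt_unit f x).trans (h x).symm)

lemma betaExt_add_const (f : BoundedContinuousFunction X ℝ) (c : ℝ) :
    betaExt (f + const X c) = fun p => betaExt f p + c :=
  betaExt_eq ((continuous_betaExt f).add continuous_const)
    (fun x => by simp [betaExt_unit])

lemma betaExt_one : betaExt (1 : BoundedContinuousFunction X ℝ) = fun _ => 1 :=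
  betaExt_eq continuous_const (fun x => by simp)

lemma betaExt_inf (f g : BoundedContinuousFunction X ℝ) :
    betaExt (f ⊓ g) = fun p => min (betaExt f p) (betaExt g p) :=
  betaExt_eq ((continuous_betaExt f).min (continuous_betaExt g))
    (fun x => by simp [betaExt_unit])

lemma betaExt_sup_const (f : BoundedContinuousFunction X ℝ) (c : ℝ) :
    betaExt (f ⊔ const X c) = fun p => max (betaExt f p) c :=
  betaExt_eq ((continuous_betaExt f).max continuous_const)
    (fun x => by simp [betaExt_unit])

lemma bddBelow_betaExt (f : BoundedContinuousFunction X ℝ) (F : Set (StoneCech X)) :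
    BddBelow (betaExt f '' F) := by
  refine ⟨-‖f‖, ?_⟩
  rintro _ ⟨q, -, rfl⟩
  exact (betaExt_mem f q).1

lemma sInf_image_of_isMinOn {α : Type*} {F : Set α} {u : α → ℝ} {p : α}
    (hp : p ∈ F) (hmin : ∀ q ∈ F, u p ≤ u q) : sInf (u '' F) = u p := by
  refine le_antisymm (csInf_le ⟨u p, ?_⟩ ⟨p, hp, rfl⟩) (le_csInf ⟨u p, p, hp, rfl⟩ ?_) <;>
    · rintro _ ⟨q, hq, rfl⟩
      exact hmin q hq

/-- The reverse direction: a functional given by a min over a nonempty compact set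
belongs to `RMin X`. -/
lemma mem_RMin_of_sInf {μ : BoundedContinuousFunction X ℝ → ℝ} (F : Set (StoneCech X))
    (hne : F.Nonempty) (hc : IsCompact F)
    (hμ : ∀ f, μ f = sInf (betaExt f '' F)) : μ ∈ RMin X := by
  have key : ∀ f : BoundedContinuousFunction X ℝ,
      ∃ p ∈ F, μ f = betaExt f p ∧ ∀ q ∈ F, betaExt f p ≤ betaExt f q := by
    intro f
    obtain ⟨p, hp, hmin⟩ := hc.exists_isMinOn hne (continuous_betaExt f).continuousOn
    exact ⟨p, hp, (hμ f).trans (sInf_image_of_isMinOn hp fun q hq => hmin hq), 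
      fun q hq => hmin hq⟩
  refine ⟨?_, ?_, ?_, ?_⟩
  · show μ 1 = 1
    rw [hμ, betaExt_one, Set.Nonempty.image_const hne, csInf_singleton]
  · intro f c
    obtain ⟨p, hp, hfp, hminf⟩ := key f
    rw [hμ, betaExt_add_const, hfp,
      sInf_image_of_isMinOn hp (fun q hq => by simpa using hminf q hq)]
  · intro f g
    obtain ⟨p₁, hp₁, hfp, hminf⟩ := key f
    obtain ⟨p₂, hp₂, hgp, hming⟩ := key g
    rw [hμ]
    refine le_antisymm (le_min ?_ ?_) (le_csInf ⟨_, ⟨p₁, hp₁, rfl⟩⟩ ?_)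
    · calc sInf (betaExt (f ⊓ g) '' F) ≤ betaExt (f ⊓ g) p₁ :=
            csInf_le (bddBelow_betaExt _ F) ⟨p₁, hp₁, rfl⟩
        _ ≤ betaExt f p₁ := by rw [betaExt_inf]; exact min_le_left _ _
        _ = μ f := hfp.symm
    · calc sInf (betaExt (f ⊓ g) '' F) ≤ betaExt (f ⊓ g) p₂ :=
            csInf_le (bddBelow_betaExt _ F) ⟨p₂, hp₂, rfl⟩
        _ ≤ betaExt g p₂ := by rw [betaExt_inf]; exact min_le_right _ _
        _ = μ g := hgp.symm
    · rintro _ ⟨q, hq, rfl⟩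
      have h1 : μ f ≤ betaExt f q := hfp.trans_le (hminf q hq)
      have h2 : μ g ≤ betaExt g q := hgp.trans_le (hming q hq)
      have h3 : betaExt (f ⊓ g) q = min (betaExt f q) (betaExt g q) :=
        congrFun (betaExt_inf f g) q
      rw [h3]
      exact le_min ((min_le_left _ _).trans h1) ((min_le_right _ _).trans h2)
  · intro f c
    obtain ⟨p, hp, hfp, hminf⟩ := key f
    rw [hμ, betaExt_sup_const, hfp,
      sInf_image_of_isMinOn hp (fun q hq => max_le_max (hminf q hq) le_rfl)]

end AuxLemmas

section Forward

open BoundedContinuousFunction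

variable {X : Type*} [TopologicalSpace X]

lemma RMin.mu_const {μ : BoundedContinuousFunction X ℝ → ℝ} (hμ : μ ∈ RMin X) (c : ℝ) :
    μ (const X c) = c := by
  obtain ⟨hN, hA, hMin, hMax⟩ := hμ
  have h0 : μ 0 = 0 := by
    have h1 := hA 0 1
    rw [zero_add] at h1
    have : const X (1 : ℝ) = (1 : BoundedContinuousFunction X ℝ) := rfl
    rw [this, hN] at h1
    linarith
  have hc := hA 0 c
  rw [zero_add, h0, zero_add] at hc
  exact hc

lemma RMin.nonempty {μ : BoundedContinuousFunction X ℝ → ℝ} (hμ : μ ∈ RMin X) :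
    Nonempty X := by
  by_contra h
  rw [not_nonempty_iff] at h
  obtain ⟨hN, hA, hMin, hMax⟩ := hμ
  have h1 := hA 0 1
  have : (0 : BoundedContinuousFunction X ℝ) + const X 1 = 0 := by
    ext x; exact (h.false x).elim
  rw [this] at h1
  linarith

/-- The key two-function lemma. -/
lemma RMin.exists_point {μ : BoundedContinuousFunction X ℝ → ℝ} (hμ : μ ∈ RMin X)
    (f h : BoundedContinuousFunction X ℝ) :
    ∃ p : StoneCech X, betaExt f p ≤ μ f ∧ μ h ≤ betaExt h p := by
  obtain ⟨hN, hA, hMin, hMax⟩ := id hμ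
  have hconst := RMin.mu_const hμ
  have hne : Nonempty (StoneCech X) := (RMin.nonempty hμ).map stoneCechUnit
  by_contra hcon
  push_neg at hcon
  set a := μ f with ha
  set b := μ h with hb
  -- the function w is everywhere positive
  set w : StoneCech X → ℝ := fun p => max (betaExt f p - a) (b - betaExt h p) with hw
  have hwc : Continuous w := ((continuous_betaExt f).sub continuous_const).max
    (continuous_const.sub (continuous_betaExt h))
  have hwpos : ∀ p, 0 < w p := by
    intro p
    by_cases hle : betaExt f p ≤ a
    · have := hcon p hle
      exact lt_max_of_lt_right (by linarith)
    · exact lt_max_of_lt_left (by push_neg at hle; linarith)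
  obtain ⟨p₀, -, hminp⟩ := isCompact_univ.exists_isMinOn
    (Set.univ_nonempty) hwc.continuousOn
  set ε := w p₀ with hε
  have hεpos : 0 < ε := hwpos p₀
  have hineq : ∀ x : X, ε ≤ max (f x - a) (b - h x) := by
    intro x
    have h0 : w p₀ ≤ w (stoneCechUnit x) := hminp (Set.mem_univ _)
    have h1 : w (stoneCechUnit x) = max (f x - a) (b - h x) := by
      rw [hw]
      simp only [betaExt_unit]
    rw [← hε, h1] at h0
    exact h0
  -- build the two truncated functions
  set f₂ : BoundedContinuousFunction X ℝ :=
    ((f + const X (-a)) ⊔ const X 0) ⊓ const X ε with hf₂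
  set h₂ : BoundedContinuousFunction X ℝ :=
    ((((h + const X (-b)) ⊔ const X (-ε)) ⊓ const X 0)) + const X ε with hh₂
  have hμf₂ : μ f₂ = 0 := by
    rw [hf₂, hMin, hconst, hMax, hA]
    rw [← ha]
    norm_num [le_of_lt hεpos]
  have hμh₂ : μ h₂ = ε := by
    rw [hh₂, hA, hMin, hconst, hMax, hA, ← hb]
    norm_num [le_of_lt hεpos]
  have hle : h₂ ≤ f₂ := by
    intro x
    have hx := hineq x
    have e1 : f₂ x = min (max (f x + -a) 0) ε := rfl
    have e2 : h₂ x = min (max (h x + -b) (-ε)) 0 + ε := rfl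
    show h₂ x ≤ f₂ x
    rw [e1, e2]
    rcases le_max_iff.mp hx with hx1 | hx2
    · have h1 : ε ≤ max (f x + -a) 0 := le_max_of_le_left (by linarith)
      have h2 : min (max (h x + -b) (-ε)) 0 ≤ 0 := min_le_right _ _
      have h3 : ε ≤ min (max (f x + -a) 0) ε := le_min h1 le_rfl
      linarith
    · have h1 : max (h x + -b) (-ε) = -ε := max_eq_right (by linarith)
      have h2 : min (-ε) (0:ℝ) = -ε := min_eq_left (by linarith)
      have h3 : (0:ℝ) ≤ min (max (f x + -a) 0) ε := le_min (le_max_right _ _) hεpos.le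
      rw [h1, h2]
      linarith
  have : μ (f₂ ⊓ h₂) = μ h₂ := by rw [inf_eq_right.mpr hle]
  rw [hMin, hμf₂, hμh₂, min_eq_left (le_of_lt hεpos)] at this
  linarith

end Forward

section MainForward

open BoundedContinuousFunction

variable {X : Type*} [TopologicalSpace X]

lemma RMin.forward {μ : BoundedContinuousFunction X ℝ → ℝ} (hμ : μ ∈ RMin X) :
    ∃ F : Set (StoneCech X), F.Nonempty ∧ IsCompact F ∧ F = betaSupport μ ∧
      ∀ f : BoundedContinuousFunction X ℝ, μ f = sInf (betaExt f '' F) := by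
  classical
  obtain ⟨hN, hA, hMin, hMax⟩ := id hμ
  -- the canonical compact set
  set F : Set (StoneCech X) := {p | ∀ g : BoundedContinuousFunction X ℝ, μ g ≤ betaExt g p}
    with hF
  have hFclosed : IsClosed F := by
    have : F = ⋂ g : BoundedContinuousFunction X ℝ, {p | μ g ≤ betaExt g p} := by
      ext p; simp [hF, Set.mem_iInter]
    rw [this]
    exact isClosed_iInter fun g => isClosed_le continuous_const (continuous_betaExt g)
  -- key : every f has a point of F where betaExt f is ≤ μ f
  have key : ∀ f : BoundedContinuousFunction X ℝ, ∃ p ∈ F, betaExt f p ≤ μ f := by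
    intro f
    have : ({p | betaExt f p ≤ μ f} ∩
        ⋂ g : BoundedContinuousFunction X ℝ, {p | μ g ≤ betaExt g p}).Nonempty := by
      refine IsCompact.inter_iInter_nonempty
        ((isClosed_le (continuous_betaExt f) continuous_const).isCompact) _
        (fun g => isClosed_le continuous_const (continuous_betaExt g)) ?_
      intro u
      rcases u.eq_empty_or_nonempty with rfl | hu
      · obtain ⟨p, hp, -⟩ := RMin.exists_point hμ f 0
        exact ⟨p, hp, by simp⟩
      · -- combine the finite family into a single function via inf'
        set k : BoundedContinuousFunction X ℝ → BoundedContinuousFunction X ℝ :=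
          fun g => g + const X (-μ g) with hk
        set h : BoundedContinuousFunction X ℝ := u.inf' hu k with hh
        have hμinf' : ∀ (s : Finset (BoundedContinuousFunction X ℝ)) (hs : s.Nonempty),
            μ (s.inf' hs k) = s.inf' hs (fun g => μ (k g)) := by
          intro s hs
          induction hs using Finset.Nonempty.cons_induction with
          | singleton g => simp
          | cons g s hg hs ih => rw [Finset.inf'_cons (H := hs), Finset.inf'_cons (H := hs), hMin, ih]
        have hβinf' : ∀ (s : Finset (BoundedContinuousFunction X ℝ)) (hs : s.Nonempty)
            (p : StoneCech X),
            betaExt (s.inf' hs k) p = s.inf' hs (fun g => betaExt (k g) p) := by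
          intro s hs p
          induction hs using Finset.Nonempty.cons_induction with
          | singleton g => simp
          | cons g s hg hs ih =>
              rw [Finset.inf'_cons (H := hs), Finset.inf'_cons (H := hs), betaExt_inf]
              simp only [ih]
        have hμh : μ h = 0 := by
          rw [hh, hμinf']
          have : ∀ g ∈ u, μ (k g) = 0 := by
            intro g hg
            rw [hk, hA]
            ring
          rw [Finset.inf'_congr hu rfl this, Finset.inf'_const]
        obtain ⟨p, hpf, hph⟩ := RMin.exists_point hμ f h
        rw [hμh] at hph
        refine ⟨p, hpf, ?_⟩
        simp only [Set.mem_iInter]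
        intro g hg
        have h1 : betaExt h p = u.inf' hu (fun g => betaExt (k g) p) := hβinf' u hu p
        have h2 : u.inf' hu (fun g => betaExt (k g) p) ≤ betaExt (k g) p :=
          Finset.inf'_le _ hg
        have h3 : betaExt (k g) p = betaExt g p + (-μ g) := by
          rw [hk]; exact congrFun (betaExt_add_const g (-μ g)) p
        have : (0 : ℝ) ≤ betaExt g p + (-μ g) := by
          rw [← h3]; exact le_trans (h1 ▸ hph) h2
        simp only [Set.mem_setOf_eq]
        linarith
    obtain ⟨p, hp1, hp2⟩ := this
    refine ⟨p, ?_, hp1⟩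
    intro g
    exact Set.mem_iInter.mp hp2 g
  have hFne : F.Nonempty := (key 0).imp fun p hp => hp.1
  have hμf : ∀ f : BoundedContinuousFunction X ℝ, μ f = sInf (betaExt f '' F) := by
    intro f
    obtain ⟨p, hp, hple⟩ := key f
    refine le_antisymm (le_csInf ⟨_, ⟨p, hp, rfl⟩⟩ ?_)
      (le_trans (csInf_le (bddBelow_betaExt f F) ⟨p, hp, rfl⟩) hple)
    rintro _ ⟨q, hq, rfl⟩
    exact hq f
  -- support equality
  have hsupp : F = betaSupport μ := by
    ext p
    constructor
    · intro hp O hO hpO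
      obtain ⟨v, hv0, hv1, hv01⟩ := exists_continuous_zero_one_of_isClosed
        (isClosed_singleton (x := p)) (hO.isClosed_compl)
        (Set.disjoint_singleton_left.mpr (by simpa using hpO))
      set fb : BoundedContinuousFunction X ℝ :=
        BoundedContinuousFunction.mkOfBound
          (v.comp ⟨stoneCechUnit, continuous_stoneCechUnit⟩) 1
          (fun x y => Real.dist_le_of_mem_Icc_01 (hv01 _) (hv01 _)) with hfb
      have hβfb : betaExt fb = v := betaExt_eq v.continuous (fun x => rfl)
      refine ⟨fb, 1, ?_, ?_⟩
      · intro q hq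
        rw [hβfb, betaExt_one]
        exact (hv1 hq).trans rfl
      · have h1 : μ fb ≤ 0 := by
          rw [hμf fb]
          refine le_trans (csInf_le (bddBelow_betaExt fb F) ⟨p, hp, rfl⟩) ?_
          rw [hβfb]
          exact le_of_eq (hv0 rfl)
        rw [hN]
        linarith
    · intro hp
      by_contra hpF
      rw [hF, Set.mem_setOf_eq] at hpF
      push_neg at hpF
      obtain ⟨g₀, hg₀⟩ := hpF
      have hO : IsOpen ((betaExt g₀) ⁻¹' (Set.Iio (μ g₀))) :=
        (continuous_betaExt g₀).isOpen_preimage _ isOpen_Iio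
      obtain ⟨f, g, hfg, hne⟩ := hp _ hO hg₀
      apply hne
      rw [hμf f, hμf g]
      congr 1
      apply Set.image_congr
      intro q hq
      exact hfg q (fun hqO => absurd (hq g₀) (not_le.mpr hqO))
  exact ⟨F, hFne, hFclosed.isCompact, hsupp, hμf⟩

end MainForward

/-- `μ ∈ R_min(X)` iff there is a nonempty compact `F ⊆ βX` with `F = S(μ)` and
`μ f = inf {βf p : p ∈ F}` for all `f ∈ C*(X)`; moreover `μ ∈ R_min(X)_c` iff such an `F`
exists contained in `η(X)`. -/
theorem statement7 {X : Type*} [TopologicalSpace X] [T35Space X]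
    (μ : BoundedContinuousFunction X ℝ → ℝ) :
    (μ ∈ RMin X ↔
      ∃ F : Set (StoneCech X), F.Nonempty ∧ IsCompact F ∧ F = betaSupport μ ∧
        ∀ f : BoundedContinuousFunction X ℝ, μ f = sInf (betaExt f '' F)) ∧
    (μ ∈ RMinC X ↔
      ∃ F : Set (StoneCech X), F.Nonempty ∧ IsCompact F ∧
        F ⊆ Set.range (stoneCechUnit : X → StoneCech X) ∧ F = betaSupport μ ∧
        ∀ f : BoundedContinuousFunction X ℝ, μ f = sInf (betaExt f '' F)) := by
  constructor
  · constructor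
    · exact fun hmem => RMin.forward hmem
    · rintro ⟨F, hne, hc, -, hf⟩
      exact mem_RMin_of_sInf F hne hc hf
  · constructor
    · rintro ⟨hmem, hne', hsub⟩
      obtain ⟨F, hne, hc, hFeq, hf⟩ := RMin.forward hmem
      exact ⟨F, hne, hc, by rw [hFeq]; exact hsub, hFeq, hf⟩
    · rintro ⟨F, hne, hc, hsub, hFeq, hf⟩
      exact ⟨mem_RMin_of_sInf F hne hc hf, by rw [← hFeq]; exact hne,
        by rw [← hFeq]; exact hsub⟩
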